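/- For σ > 0, γ > 0, the accept–reject algorithm for the Dual Voigt is correct: let μ_X be the N(−γ/σ², 1/σ²) law on ℝ, let A = {c : c > 0} ∪ {c : c ≤ −2γ/σ²} be the acceptance region, and define g(c) = c for c > 0 and g(c) = c + 2γ/σ² for c ≤ −2γ/σ². Then μ_X(A) = 2(1 − Φ(γ/σ)), and the pushforward under g of the conditional law μ_X(· | A) has density equal to the Dual Voigt(γ, σ²) density p'. -/

import Mathlib

open MeasureTheory ProbabilityTheory Real

/-- The standard normal cumulative distribution function. -/
noncomputable def stdNormalCDF (t : ℝ) : ℝ :=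
  ∫ s in Set.Iic t, (1 / Real.sqrt (2 * π)) * Real.exp (-s ^ 2 / 2)

/-- The Dual Voigt(γ, σ²) density. -/
noncomputable def dualVoigtDensity (σ γ : ℝ) (u : ℝ) : ℝ :=
  1 / (2 * (1 - stdNormalCDF (γ / σ))) * (σ / Real.sqrt (2 * π)) *
    Real.exp (-γ ^ 2 / (2 * σ ^ 2)) * Real.exp (-γ * |u| - σ ^ 2 * u ^ 2 / 2)

lemma stdF_integrable : Integrable (fun s : ℝ => (1 / Real.sqrt (2 * π)) * Real.exp (-s ^ 2 / 2)) := by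
  have h : (fun s : ℝ => (1 / Real.sqrt (2 * π)) * Real.exp (-s ^ 2 / 2))
      = fun s : ℝ => (1 / Real.sqrt (2 * π)) * Real.exp (-(1/2 : ℝ) * s ^ 2) := by
    ext s; ring_nf
  rw [h]
  exact (integrable_exp_neg_mul_sq (by norm_num)).const_mul _

lemma stdF_total : ∫ s : ℝ, (1 / Real.sqrt (2 * π)) * Real.exp (-s ^ 2 / 2) = 1 := by
  have h : ∀ s : ℝ, Real.exp (-s ^ 2 / 2) = Real.exp (-(1/2 : ℝ) * s ^ 2) := by
    intro s; ring_nf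
  simp_rw [h]
  rw [integral_const_mul, integral_gaussian]
  have h2 : (π / (1/2 : ℝ)) = 2 * π := by ring
  rw [h2]
  have : Real.sqrt (2 * π) ≠ 0 := by positivity
  field_simp

lemma oneSub_stdNormalCDF (t : ℝ) :
    1 - stdNormalCDF t = ∫ s in Set.Ioi t, (1 / Real.sqrt (2 * π)) * Real.exp (-s ^ 2 / 2) := by
  have h := intervalIntegral.integral_Iic_add_Ioi (b := t)
    (f := fun s : ℝ => (1 / Real.sqrt (2 * π)) * Real.exp (-s ^ 2 / 2)) (μ := volume)
    stdF_integrable.integrableOn stdF_integrable.integrableOn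
  rw [stdF_total] at h
  rw [stdNormalCDF]
  linarith

lemma oneSub_stdNormalCDF_pos (t : ℝ) : 0 < 1 - stdNormalCDF t := by
  rw [oneSub_stdNormalCDF]
  have hpos : ∀ s : ℝ, 0 < (1 / Real.sqrt (2 * π)) * Real.exp (-s ^ 2 / 2) := by
    intro s; positivity
  rw [setIntegral_pos_iff_support_of_nonneg_ae
    (ae_of_all _ fun s => (hpos s).le) stdF_integrable.integrableOn]
  have hsupp : Function.support (fun s : ℝ => (1 / Real.sqrt (2 * π)) * Real.exp (-s ^ 2 / 2))
      ∩ Set.Ioi t = Set.Ioi t := by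
    ext x
    simp only [Set.mem_inter_iff, Function.mem_support, Set.mem_Ioi, and_iff_right_iff_imp]
    exact fun _ => (hpos x).ne'
  rw [hsupp, Real.volume_Ioi]
  simp

lemma gaussianPDFReal_eq (σ γ : ℝ) (hσ : 0 < σ) (u : ℝ) :
    gaussianPDFReal (-γ / σ ^ 2) (Real.toNNReal (1 / σ ^ 2)) u
      = σ * ((1 / Real.sqrt (2 * π)) * Real.exp (-(σ * u + γ / σ) ^ 2 / 2)) := by
  have hσ2 : (0:ℝ) < σ ^ 2 := by positivity
  rw [gaussianPDFReal]
  rw [Real.coe_toNNReal _ (by positivity : (0:ℝ) ≤ 1 / σ ^ 2)]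
  have h1 : Real.sqrt (2 * π * (1 / σ ^ 2)) = Real.sqrt (2 * π) / σ := by
    rw [show (2 * π * (1 / σ ^ 2)) = (2 * π) / σ ^ 2 by ring,
      Real.sqrt_div (by positivity), Real.sqrt_sq hσ.le]
  rw [h1]
  have h2 : -(u - (-γ / σ ^ 2)) ^ 2 / (2 * (1 / σ ^ 2)) = -(σ * u + γ / σ) ^ 2 / 2 := by
    field_simp
    ring
  rw [h2]
  have h3 : (Real.sqrt (2 * π) / σ)⁻¹ = σ * (1 / Real.sqrt (2 * π)) := by
    rw [inv_div]; ring
  rw [h3, mul_assoc]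

/-- correctness of the accept–reject algorithm for the Dual Voigt. With
μ_X the N(−γ/σ², 1/σ²) law, acceptance region A = {c > 0} ∪ {c ≤ −2γ/σ²}, and
g(c) = c on {c > 0}, g(c) = c + 2γ/σ² otherwise, we have μ_X(A) = 2(1 − Φ(γ/σ)), and the
pushforward of the conditional law μ_X(·|A) under g has the Dual Voigt density. -/
theorem dualVoigt_accept_reject (σ γ : ℝ) (hσ : 0 < σ) (hγ : 0 < γ) :
    (gaussianReal (-γ / σ ^ 2) (Real.toNNReal (1 / σ ^ 2)))
        ({c : ℝ | 0 < c} ∪ {c : ℝ | c ≤ -2 * γ / σ ^ 2}) =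
      ENNReal.ofReal (2 * (1 - stdNormalCDF (γ / σ))) ∧
    (ProbabilityTheory.cond (gaussianReal (-γ / σ ^ 2) (Real.toNNReal (1 / σ ^ 2)))
        ({c : ℝ | 0 < c} ∪ {c : ℝ | c ≤ -2 * γ / σ ^ 2})).map
        (fun c : ℝ => if 0 < c then c else c + 2 * γ / σ ^ 2) =
      volume.withDensity (fun u : ℝ => ENNReal.ofReal (dualVoigtDensity σ γ u)) := by
  have hσ2 : (0:ℝ) < σ ^ 2 := by positivity
  have ha : (0:ℝ) < 2 * γ / σ ^ 2 := by positivity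
  have hv : Real.toNNReal (1 / σ ^ 2) ≠ 0 := by
    refine (Real.toNNReal_pos.mpr (by positivity)).ne'
  set m : ℝ := -γ / σ ^ 2 with hm
  set a : ℝ := 2 * γ / σ ^ 2 with haa
  set v : NNReal := Real.toNNReal (1 / σ ^ 2) with hvv
  set Φ : ℝ := stdNormalCDF (γ / σ) with hΦ
  have hZpos : 0 < 2 * (1 - Φ) := by
    have := oneSub_stdNormalCDF_pos (γ / σ); rw [← hΦ] at this; linarith
  -- rewrite the sets
  have hnum : (-2 * γ / σ ^ 2 : ℝ) = -a := by rw [haa]; ring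
  have hset1 : {c : ℝ | 0 < c} = Set.Ioi (0:ℝ) := rfl
  have hset2 : {c : ℝ | c ≤ -2 * γ / σ ^ 2} = Set.Iic (-a) := by
    rw [← hnum]; rfl
  rw [hset1, hset2]
  -- the pdf
  set pdf : ℝ → ℝ := gaussianPDFReal m v with hpdf
  have hpdf_eq : ∀ u : ℝ, pdf u
      = σ * ((1 / Real.sqrt (2 * π)) * Real.exp (-(σ * u + γ / σ) ^ 2 / 2)) := fun u =>
    gaussianPDFReal_eq σ γ hσ u
  -- K1 : integral over Ioi 0
  have K1 : ∫ x in Set.Ioi (0:ℝ), pdf x = 1 - Φ := by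
    have step1 : ∫ x in Set.Ioi (0:ℝ), pdf x
        = σ * ∫ x in Set.Ioi (0:ℝ),
            (fun y : ℝ => (1 / Real.sqrt (2 * π)) * Real.exp (-(y + γ / σ) ^ 2 / 2)) (σ * x) := by
      rw [← integral_const_mul]
      exact setIntegral_congr_fun measurableSet_Ioi fun x _ => by
        simpa using hpdf_eq x
    have step2 := integral_comp_mul_left_Ioi
      (fun y : ℝ => (1 / Real.sqrt (2 * π)) * Real.exp (-(y + γ / σ) ^ 2 / 2)) 0 hσ
    have step3 : ∫ y in Set.Ioi (0:ℝ),
        (1 / Real.sqrt (2 * π)) * Real.exp (-(y + γ / σ) ^ 2 / 2)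
        = ∫ s in Set.Ioi (γ / σ), (1 / Real.sqrt (2 * π)) * Real.exp (-s ^ 2 / 2) := by
      have hpre : (fun y : ℝ => y + γ / σ) ⁻¹' Set.Ioi (γ / σ) = Set.Ioi 0 := by
        ext y
        simp only [Set.mem_preimage, Set.mem_Ioi]
        constructor <;> intro <;> linarith
      have h := (measurePreserving_add_right volume (γ / σ)).setIntegral_preimage_emb
        (measurableEmbedding_addRight (γ / σ))
        (fun s : ℝ => (1 / Real.sqrt (2 * π)) * Real.exp (-s ^ 2 / 2)) (Set.Ioi (γ / σ))
      rw [hpre] at h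
      have h2 : ∀ y : ℝ, -(y + γ / σ) ^ 2 / 2 = -((fun x => x + γ / σ) y) ^ 2 / 2 := fun y => rfl
      exact h
    rw [step1, step2, mul_zero, step3, oneSub_stdNormalCDF, smul_eq_mul, ← mul_assoc,
      mul_inv_cancel₀ hσ.ne', one_mul]
  -- K2 : integral over Iic (-a)
  have K2 : ∫ x in Set.Iic (-a), pdf x = 1 - Φ := by
    have hrefl : ∀ y : ℝ, pdf (-a - y) = pdf y := by
      intro y
      rw [hpdf_eq, hpdf_eq]
      have h : σ * (-a - y) + γ / σ = -(σ * y + γ / σ) := by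
        rw [haa]; field_simp; ring
      rw [h, neg_sq]
    have hemb : MeasurableEmbedding (fun y : ℝ => -a - y) := by
      have h := (measurableEmbedding_addLeft (-a)).comp measurableEmbedding_neg
      simpa [Function.comp_def, sub_eq_add_neg] using h
    have hmp : MeasurePreserving (fun y : ℝ => -a - y) volume volume :=
      Measure.measurePreserving_sub_left volume (-a)
    have hpre : (fun y : ℝ => -a - y) ⁻¹' Set.Iic (-a) = Set.Ici 0 := by
      ext y
      simp only [Set.mem_preimage, Set.mem_Iic, Set.mem_Ici]
      constructor <;> intro <;> linarith
    have h := hmp.setIntegral_preimage_emb hemb pdf (Set.Iic (-a))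
    rw [hpre] at h
    simp only [hrefl] at h
    rw [← h, MeasureTheory.integral_Ici_eq_integral_Ioi, K1]
  -- disjointness
  have hd : Disjoint (Set.Ioi (0:ℝ)) (Set.Iic (-a)) := by
    rw [Set.disjoint_left]
    intro x hx hx'
    simp only [Set.mem_Ioi] at hx
    simp only [Set.mem_Iic] at hx'
    linarith
  -- Part 1
  have part1 : (gaussianReal m v) (Set.Ioi 0 ∪ Set.Iic (-a))
      = ENNReal.ofReal (2 * (1 - Φ)) := by
    rw [measure_union hd measurableSet_Iic,
      gaussianReal_apply_eq_integral _ hv _, gaussianReal_apply_eq_integral _ hv _]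
    rw [show (∫ x in Set.Ioi (0:ℝ), gaussianPDFReal m v x) = 1 - Φ from K1,
      show (∫ x in Set.Iic (-a), gaussianPDFReal m v x) = 1 - Φ from K2]
    rw [← ENNReal.ofReal_add (by linarith) (by linarith)]
    congr 1
    ring
  refine ⟨part1, ?_⟩
  -- Part 2
  -- pointwise identities
  have hdv : ∀ u : ℝ, 2 * (1 - Φ) * dualVoigtDensity σ γ u
      = σ / Real.sqrt (2 * π)
        * Real.exp (-γ ^ 2 / (2 * σ ^ 2) + (-γ * |u| - σ ^ 2 * u ^ 2 / 2)) := by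
    intro u
    rw [dualVoigtDensity, Real.exp_add, ← hΦ]
    have h2π : Real.sqrt (2 * π) ≠ 0 := by positivity
    have h1Φ : 1 - Φ ≠ 0 := by linarith
    field_simp
  have hptI : ∀ u : ℝ, 0 < u → pdf u = 2 * (1 - Φ) * dualVoigtDensity σ γ u := by
    intro u hu
    rw [hdv u, hpdf_eq u, abs_of_pos hu]
    have hexp : -(σ * u + γ / σ) ^ 2 / 2
        = -γ ^ 2 / (2 * σ ^ 2) + (-γ * u - σ ^ 2 * u ^ 2 / 2) := by
      field_simp
      ring
    rw [hexp]
    ring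
  have hptII : ∀ u : ℝ, u ≤ 0 → pdf (u - a) = 2 * (1 - Φ) * dualVoigtDensity σ γ u := by
    intro u hu
    rw [hdv u, hpdf_eq (u - a), abs_of_nonpos hu]
    have hexp : -(σ * (u - a) + γ / σ) ^ 2 / 2
        = -γ ^ 2 / (2 * σ ^ 2) + (-γ * (-u) - σ ^ 2 * u ^ 2 / 2) := by
      rw [haa]
      field_simp
      ring
    rw [hexp]
    ring
  -- measurability of g
  have hg : Measurable (fun c : ℝ => if 0 < c then c else c + 2 * γ / σ ^ 2) :=
    Measurable.ite (measurableSet_lt measurable_const measurable_id)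
      measurable_id (measurable_id.add_const _)
  -- dualVoigt nonneg
  have hdvnn : ∀ u : ℝ, 0 ≤ dualVoigtDensity σ γ u := by
    intro u
    rw [dualVoigtDensity, ← hΦ]
    have h1 : (0:ℝ) ≤ 1 / (2 * (1 - Φ)) := by positivity
    have h2 : (0:ℝ) ≤ σ / Real.sqrt (2 * π) := by positivity
    exact mul_nonneg (mul_nonneg (mul_nonneg h1 h2) (Real.exp_nonneg _)) (Real.exp_nonneg _)
  ext S hS
  -- LHS
  rw [ProbabilityTheory.cond, Measure.map_smul, part1, Measure.smul_apply, smul_eq_mul,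
    Measure.map_apply hg hS, Measure.restrict_apply (hg hS)]
  -- split the preimage
  have hsplit : (fun c : ℝ => if 0 < c then c else c + 2 * γ / σ ^ 2) ⁻¹' S
        ∩ (Set.Ioi 0 ∪ Set.Iic (-a))
      = (S ∩ Set.Ioi 0) ∪ ((fun y : ℝ => y + a) ⁻¹' (S ∩ Set.Iic 0)) := by
    ext x
    by_cases hx : 0 < x
    · simp only [Set.mem_inter_iff, Set.mem_union, Set.mem_preimage, Set.mem_Ioi, Set.mem_Iic,
        if_pos hx]
      constructor
      · rintro ⟨hS', _⟩; exact Or.inl ⟨hS', hx⟩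
      · rintro (⟨hS', _⟩ | ⟨_, hle⟩)
        · exact ⟨hS', Or.inl hx⟩
        · exfalso; linarith
    · push_neg at hx
      simp only [Set.mem_inter_iff, Set.mem_union, Set.mem_preimage, Set.mem_Ioi, Set.mem_Iic,
        if_neg (not_lt.mpr hx)]
      constructor
      · rintro ⟨hS', hA⟩
        rcases hA with h0 | hle
        · exact absurd h0 (not_lt.mpr hx)
        · exact Or.inr ⟨hS', by linarith⟩
      · rintro (⟨_, h0⟩ | ⟨hS', hle⟩)
        · exact absurd h0 (not_lt.mpr hx)
        · exact ⟨hS', Or.inr (by linarith)⟩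
  rw [hsplit]
  have hE2meas : MeasurableSet ((fun y : ℝ => y + a) ⁻¹' (S ∩ Set.Iic 0)) :=
    (measurable_id.add_const a) (hS.inter measurableSet_Iic)
  have hd2 : Disjoint (S ∩ Set.Ioi (0:ℝ)) ((fun y : ℝ => y + a) ⁻¹' (S ∩ Set.Iic 0)) := by
    rw [Set.disjoint_left]
    rintro x ⟨_, hx⟩ hx2
    simp only [Set.mem_preimage, Set.mem_inter_iff, Set.mem_Iic] at hx2
    simp only [Set.mem_Ioi] at hx
    linarith [hx2.2]
  rw [measure_union hd2 hE2meas,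
    gaussianReal_apply_eq_integral _ hv _, gaussianReal_apply_eq_integral _ hv _]
  -- compute the two integrals
  have hI1 : ∫ x in S ∩ Set.Ioi 0, gaussianPDFReal m v x
      = ∫ x in S ∩ Set.Ioi 0, 2 * (1 - Φ) * dualVoigtDensity σ γ x :=
    setIntegral_congr_fun (hS.inter measurableSet_Ioi) fun x hx => hptI x hx.2
  have hI2 : ∫ x in (fun y : ℝ => y + a) ⁻¹' (S ∩ Set.Iic 0), gaussianPDFReal m v x
      = ∫ y in S ∩ Set.Iic 0, 2 * (1 - Φ) * dualVoigtDensity σ γ y := by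
    have h := (measurePreserving_add_right volume a).setIntegral_preimage_emb
      (measurableEmbedding_addRight a) (fun y : ℝ => gaussianPDFReal m v (y - a))
      (S ∩ Set.Iic 0)
    simp only [add_sub_cancel_right] at h
    rw [h]
    exact setIntegral_congr_fun (hS.inter measurableSet_Iic) fun y hy => hptII y hy.2
  rw [hI1, hI2]
  -- integrability
  have hInt1 : IntegrableOn (fun u : ℝ => 2 * (1 - Φ) * dualVoigtDensity σ γ u)
      (S ∩ Set.Ioi 0) volume :=
    (integrable_gaussianPDFReal m v).integrableOn.congr_fun
      (fun x hx => hptI x hx.2) (hS.inter measurableSet_Ioi)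
  have hInt2 : IntegrableOn (fun u : ℝ => 2 * (1 - Φ) * dualVoigtDensity σ γ u)
      (S ∩ Set.Iic 0) volume :=
    ((integrable_gaussianPDFReal m v).comp_sub_right a).integrableOn.congr_fun
      (fun x hx => hptII x hx.2) (hS.inter measurableSet_Iic)
  have hSdecomp : (S ∩ Set.Ioi (0:ℝ)) ∪ (S ∩ Set.Iic 0) = S := by
    ext x
    by_cases hx : 0 < x <;>
      simp [Set.mem_inter_iff, hx, le_of_not_gt, not_lt]
  have hd3 : Disjoint (S ∩ Set.Ioi (0:ℝ)) (S ∩ Set.Iic 0) := by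
    rw [Set.disjoint_left]
    rintro x ⟨_, hx1⟩ ⟨_, hx2⟩
    simp only [Set.mem_Ioi] at hx1
    simp only [Set.mem_Iic] at hx2
    linarith
  have hIntS : IntegrableOn (fun u : ℝ => 2 * (1 - Φ) * dualVoigtDensity σ γ u) S volume := by
    rw [← hSdecomp]; exact hInt1.union hInt2
  -- sum of integrals
  have hnn1 : 0 ≤ ∫ x in S ∩ Set.Ioi 0, 2 * (1 - Φ) * dualVoigtDensity σ γ x :=
    setIntegral_nonneg (hS.inter measurableSet_Ioi)
      fun x _ => mul_nonneg hZpos.le (hdvnn x)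
  have hnn2 : 0 ≤ ∫ x in S ∩ Set.Iic 0, 2 * (1 - Φ) * dualVoigtDensity σ γ x :=
    setIntegral_nonneg (hS.inter measurableSet_Iic)
      fun x _ => mul_nonneg hZpos.le (hdvnn x)
  rw [← ENNReal.ofReal_add hnn1 hnn2,
    ← setIntegral_union hd3 (hS.inter measurableSet_Iic) hInt1 hInt2, hSdecomp]
  -- RHS
  have hIntdv : IntegrableOn (fun u : ℝ => dualVoigtDensity σ γ u) S volume := by
    have h' := hIntS.const_mul (2 * (1 - Φ))⁻¹
    have heq : ∀ u : ℝ, (2 * (1 - Φ))⁻¹ * (2 * (1 - Φ) * dualVoigtDensity σ γ u)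
        = dualVoigtDensity σ γ u := by
      intro u; rw [← mul_assoc, inv_mul_cancel₀ hZpos.ne', one_mul]
    simpa only [heq, IntegrableOn] using h'
  rw [withDensity_apply _ hS,
    ← ofReal_integral_eq_lintegral_ofReal hIntdv (ae_of_all _ fun u => hdvnn u)]
  rw [integral_const_mul, ENNReal.ofReal_mul hZpos.le, ← mul_assoc,
    ENNReal.inv_mul_cancel (ENNReal.ofReal_pos.mpr hZpos).ne' ENNReal.ofReal_ne_top, one_mul]
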